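/- Let B be an n×n row-stochastic matrix that is irreducible, and let x ∈ ℂⁿ be a nonzero vector with B x = θ_{1,3} x, where θ_{1,3} = exp(2πι/3). Then for every pair (i,j) with B_{ij} ≠ 0 one has x_j = θ_{1,3} x_i. Consequently, fixing any index i₀, the sets V_l = { i : x_i = θ_{l,3} x_{i₀} } for l = 0, 1, 2 partition {1,…,n}, and B_{ij} ≠ 0 implies that i ∈ V_l and j ∈ V_{(l+1) mod 3} for some l; that is, the entries of x cluster the vertices into the three groups of a 3-cyclic structure. -/

import Mathlib

open Matrix

/-- `theta p q = exp(2·π·ι·p/q)`, the `p`-th power of the primitive `q`-th root of unity. -/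
noncomputable def theta (p q : ℕ) : ℂ :=
  Complex.exp (2 * Real.pi * Complex.I * p / q)

/-- A real square matrix is row-stochastic if its entries are nonnegative and
every row sums to 1. -/
def RowStochastic {n : ℕ} (B : Matrix (Fin n) (Fin n) ℝ) : Prop :=
  (∀ i j, 0 ≤ B i j) ∧ ∀ i, ∑ j, B i j = 1

/-- A real square matrix is irreducible if its support digraph
(edge `(i,j)` whenever `B i j ≠ 0`) is strongly connected. -/
def IrreducibleMatrix {n : ℕ} (B : Matrix (Fin n) (Fin n) ℝ) : Prop :=
  ∀ i j : Fin n, Relation.ReflTransGen (fun a b => B a b ≠ 0) i j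

lemma theta_prim : IsPrimitiveRoot (theta 1 3) 3 := by
  have h := Complex.isPrimitiveRoot_exp 3 (by norm_num)
  have : theta 1 3 = Complex.exp (2 * Real.pi * Complex.I / (3:ℕ)) := by
    rw [theta]; norm_num
  rwa [this]

lemma theta_cube : theta 1 3 ^ 3 = 1 := theta_prim.pow_eq_one

lemma theta_pow_mod (a : ℕ) : theta 1 3 ^ a = theta 1 3 ^ (a % 3) := by
  conv_lhs => rw [← Nat.div_add_mod a 3, pow_add, pow_mul, theta_cube, one_pow, one_mul]

lemma theta_pow (m : ℕ) : theta m 3 = theta 1 3 ^ m := by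
  rw [theta, theta, ← Complex.exp_nat_mul]
  congr 1
  push_cast
  ring

lemma theta_abs : ‖theta 1 3‖ = 1 := by
  rw [theta, Complex.norm_exp]
  norm_num [Complex.div_re, Complex.normSq]


/-- for a nonzero eigenvector `x` of an irreducible row-stochastic matrix `B`
with `B x = θ_{1,3} x`, every edge `(i,j)` (i.e. `B i j ≠ 0`) satisfies `x_j = θ_{1,3} x_i`;
consequently, for any fixed `i₀`, the sets `V_l = {i | x_i = θ_{l,3} x_{i₀}}`, `l = 0,1,2`,
partition the vertices, and every edge goes from some `V_l` to `V_{(l+1) mod 3}`. -/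
theorem stmt5 {n : ℕ} (B : Matrix (Fin n) (Fin n) ℝ)
    (hrs : RowStochastic B) (hirr : IrreducibleMatrix B)
    (x : Fin n → ℂ) (hx : x ≠ 0)
    (heig : (B.map Complex.ofReal).mulVec x = theta 1 3 • x) :
    (∀ i j, B i j ≠ 0 → x j = theta 1 3 * x i) ∧
    ∀ i₀ : Fin n,
      (∀ i, ∃! l : Fin 3, x i = theta l.val 3 * x i₀) ∧
      (∀ i j, B i j ≠ 0 → ∀ l : Fin 3, x i = theta l.val 3 * x i₀ →
        x j = theta ((l + 1) : Fin 3).val 3 * x i₀) := by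
  obtain ⟨hpos, hrow⟩ := hrs
  have hn : 0 < n := by
    rcases Nat.eq_zero_or_pos n with h | h
    · subst h; exact absurd (funext fun i => i.elim0) hx
    · exact h
  haveI : NeZero n := ⟨hn.ne'⟩
  have hne : (Finset.univ : Finset (Fin n)).Nonempty := Finset.univ_nonempty
  set M : ℝ := Finset.univ.sup' hne (fun i => ‖x i‖) with hM
  have hle : ∀ k, ‖x k‖ ≤ M := fun k => Finset.le_sup' (fun i => ‖x i‖) (Finset.mem_univ k)
  obtain ⟨imax, -, hmax⟩ := Finset.exists_mem_eq_sup' hne (fun i => ‖x i‖)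
  have hMpos : 0 < M := by
    by_contra h
    push_neg at h
    apply hx
    funext k
    have h2 : ‖x k‖ = 0 := le_antisymm ((hle k).trans h) (norm_nonneg _)
    simpa using h2
  have hrowEq : ∀ i, ∑ k, (B i k : ℂ) * x k = theta 1 3 * x i := by
    intro i
    have := congrFun heig i
    simpa [Matrix.mulVec, Matrix.map, dotProduct, Pi.smul_apply, smul_eq_mul] using this
  have hsum : ∀ i, ‖x i‖ = M → ∑ k, B i k * ‖x k‖ = M := by
    intro i hi
    have h1 : ‖theta 1 3 * x i‖ = M := by rw [norm_mul, theta_abs, one_mul, hi]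
    have h2 : M ≤ ∑ k, B i k * ‖x k‖ := by
      calc M = ‖∑ k, (B i k : ℂ) * x k‖ := by rw [hrowEq i, h1]
      _ ≤ ∑ k, ‖(B i k : ℂ) * x k‖ := norm_sum_le _ _
      _ = ∑ k, B i k * ‖x k‖ := by
          refine Finset.sum_congr rfl fun k _ => ?_
          rw [norm_mul, Complex.norm_real, Real.norm_eq_abs, abs_of_nonneg (hpos i k)]
    have h3 : ∑ k, B i k * ‖x k‖ ≤ M := by
      calc ∑ k, B i k * ‖x k‖ ≤ ∑ k, B i k * M :=
        Finset.sum_le_sum (fun k _ => mul_le_mul_of_nonneg_left (hle k) (hpos i k))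
      _ = M := by rw [← Finset.sum_mul, hrow i, one_mul]
    linarith
  have hfwd : ∀ i j, ‖x i‖ = M → B i j ≠ 0 → ‖x j‖ = M := by
    intro i j hi hij
    have hz : ∑ k, B i k * (M - ‖x k‖) = 0 := by
      have e : ∀ k : Fin n, B i k * (M - ‖x k‖)
          = B i k * M - B i k * ‖x k‖ := fun k => by ring
      rw [Finset.sum_congr rfl fun k _ => e k, Finset.sum_sub_distrib,
        ← Finset.sum_mul, hrow i, one_mul, hsum i hi, sub_self]
    have hnn : ∀ k ∈ Finset.univ, 0 ≤ B i k * (M - ‖x k‖) :=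
      fun k _ => mul_nonneg (hpos i k) (sub_nonneg.mpr (hle k))
    have := (Finset.sum_eq_zero_iff_of_nonneg hnn).mp hz j (Finset.mem_univ j)
    rcases mul_eq_zero.mp this with h | h
    · exact absurd h hij
    · linarith [sub_eq_zero.mp h]
  have habsM : ∀ i, ‖x i‖ = M := by
    intro i
    induction hirr imax i with
    | refl => exact hmax.symm
    | tail hp he ih => exact hfwd _ _ ih he
  -- Claim B: edge alignment
  have hedge : ∀ i j, B i j ≠ 0 → x j = theta 1 3 * x i := by
    intro i j hij
    set c := (starRingEnd ℂ) (theta 1 3 * x i) with hc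
    have habsc : ‖c‖ = M := by
      rw [hc, Complex.norm_conj, norm_mul, theta_abs, one_mul, habsM i]
    have hcne : c ≠ 0 := fun h => by rw [h] at habsc; simp at habsc; exact hMpos.ne' habsc.symm
    have hprod : theta 1 3 * x i * c = ((M^2 : ℝ) : ℂ) := by
      rw [hc, Complex.mul_conj]
      congr 1
      rw [← Complex.sq_norm, norm_mul, theta_abs, one_mul, habsM i]
    have hsum2 : ∑ k, (B i k : ℂ) * (x k * c) = ((M^2:ℝ):ℂ) := by
      calc ∑ k, (B i k:ℂ) * (x k * c) = (∑ k, (B i k:ℂ) * x k) * c := by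
            rw [Finset.sum_mul]; exact Finset.sum_congr rfl fun k _ => by ring
      _ = theta 1 3 * x i * c := by rw [hrowEq i]
      _ = _ := hprod
    have hre : ∑ k, B i k * (x k * c).re = M^2 := by
      have h := congrArg Complex.re hsum2
      simpa [Complex.re_sum, Complex.mul_re, ← Complex.ofReal_pow] using h
    have hterm : ∀ k, (x k * c).re ≤ M^2 := by
      intro k
      calc (x k * c).re ≤ ‖x k * c‖ := Complex.re_le_norm _
      _ = M^2 := by rw [norm_mul, habsM k, habsc]; ring
    have hz : ∑ k, B i k * (M^2 - (x k * c).re) = 0 := by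
      have e : ∀ k : Fin n, B i k * (M^2 - (x k * c).re)
          = B i k * M^2 - B i k * (x k * c).re := fun k => by ring
      rw [Finset.sum_congr rfl fun k _ => e k, Finset.sum_sub_distrib,
        ← Finset.sum_mul, hrow i, one_mul, hre, sub_self]
    have hnn : ∀ k ∈ Finset.univ, 0 ≤ B i k * (M^2 - (x k * c).re) :=
      fun k _ => mul_nonneg (hpos i k) (sub_nonneg.mpr (hterm k))
    have hj := (Finset.sum_eq_zero_iff_of_nonneg hnn).mp hz j (Finset.mem_univ j)
    have hrej : (x j * c).re = M^2 := by
      rcases mul_eq_zero.mp hj with h | h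
      · exact absurd h hij
      · linarith [sub_eq_zero.mp h]
    have habsjc : ‖x j * c‖ = M^2 := by
      rw [norm_mul, habsM j, habsc]; ring
    have hnsq : Complex.normSq (x j * c) = (M^2)^2 := by
      rw [← Complex.sq_norm, habsjc]
    have him : (x j * c).im = 0 := by
      have h2 := Complex.normSq_apply (x j * c)
      nlinarith [sq_nonneg ((x j * c).im)]
    have hxjc : x j * c = ((M^2:ℝ):ℂ) := by
      apply Complex.ext
      · rw [hrej, Complex.ofReal_re]
      · rw [him, Complex.ofReal_im]
    exact mul_right_cancel₀ hcne (hxjc.trans hprod.symm)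
  have hx0 : ∀ i, x i ≠ 0 := by
    intro i h
    have := habsM i
    rw [h] at this
    simp at this
    exact hMpos.ne this
  have hpow : ∀ i j, Relation.ReflTransGen (fun a b => B a b ≠ 0) i j →
      ∃ k : ℕ, x j = theta 1 3 ^ k * x i := by
    intro i j h
    induction h with
    | refl => exact ⟨0, by simp⟩
    | tail hp he ih =>
        obtain ⟨k, hk⟩ := ih
        exact ⟨k + 1, by rw [hedge _ _ he, hk]; ring⟩
  refine ⟨hedge, fun i₀ => ⟨fun i => ?_, fun i j hij l hl => ?_⟩⟩
  · obtain ⟨k, hk⟩ := hpow i₀ i (hirr i₀ i)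
    refine ⟨⟨k % 3, Nat.mod_lt _ (by norm_num)⟩, ?_, ?_⟩
    · show x i = theta (k % 3) 3 * x i₀
      rw [theta_pow, ← theta_pow_mod]
      exact hk
    · intro l' hl'
      apply Fin.ext
      apply theta_prim.pow_inj l'.isLt (Nat.mod_lt _ (by norm_num))
      have h2 : theta 1 3 ^ l'.val * x i₀ = theta 1 3 ^ (k % 3) * x i₀ := by
        rw [← theta_pow l'.val, ← hl', hk, theta_pow_mod]
      exact mul_right_cancel₀ (hx0 i₀) h2
  · have hval : ((l + 1 : Fin 3)).val = (l.val + 1) % 3 := rfl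
    calc x j = theta 1 3 * x i := hedge _ _ hij
    _ = theta 1 3 * (theta 1 3 ^ l.val * x i₀) := by rw [hl, theta_pow l.val]
    _ = theta 1 3 ^ (l.val + 1) * x i₀ := by ring
    _ = theta 1 3 ^ ((l.val + 1) % 3) * x i₀ := by rw [← theta_pow_mod]
    _ = theta ((l + 1 : Fin 3)).val 3 * x i₀ := by rw [theta_pow ((l + 1 : Fin 3)).val, hval]
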